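/- Let u ∈ (0,1) and let η_x have the distribution of the hitting time conditioned on hitting: P(η_x = y) = P(σ_y = x)/P(H_x). Then E(η_x) = ((x+1)/(1+u))·(1+(−u)^{x+2})/(1−(−u)^{x+1}) − (1+u²)/(1+u)² for every positive integer x. -/

import Mathlib

open MeasureTheory ProbabilityTheory

lemma hit_closed_form (u : ℝ) (A N : ℕ → ℝ)
    (hA0 : A 0 = 1) (hA1 : A 1 = 1 - u) (hN0 : N 0 = 0) (hN1 : N 1 = 1 - u)
    (hArec : ∀ x, A (x + 2) = (1 - u) * A (x + 1) + u * A x)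
    (hNrec : ∀ x, N (x + 2) = (1 - u) * N (x + 1) + u * N x + A (x + 2)) :
    ∀ x : ℕ, (1 + u) * A x = 1 - (-u) ^ (x + 1) ∧
      (1 + u) ^ 3 * N x = ((x : ℝ) + 1) * (1 + u) * (1 + (-u) ^ (x + 2))
        - (1 + u ^ 2) * (1 - (-u) ^ (x + 1)) := by
  have key : ∀ x : ℕ,
      ((1 + u) * A x = 1 - (-u) ^ (x + 1) ∧
        (1 + u) ^ 3 * N x = ((x : ℝ) + 1) * (1 + u) * (1 + (-u) ^ (x + 2))
          - (1 + u ^ 2) * (1 - (-u) ^ (x + 1))) ∧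
      ((1 + u) * A (x + 1) = 1 - (-u) ^ (x + 2) ∧
        (1 + u) ^ 3 * N (x + 1) = ((x : ℝ) + 2) * (1 + u) * (1 + (-u) ^ (x + 3))
          - (1 + u ^ 2) * (1 - (-u) ^ (x + 2))) := by
    intro x
    induction x with
    | zero =>
      refine ⟨⟨?_, ?_⟩, ?_, ?_⟩ <;> simp [hA0, hA1, hN0, hN1] <;> ring
    | succ n ih =>
      obtain ⟨⟨ha0, hn0⟩, ha1, hn1⟩ := ih
      have ha2 : (1 + u) * A (n + 2) = 1 - (-u) ^ (n + 3) := by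
        have h := hArec n
        simp only [pow_succ] at ha0 ha1 ⊢
        linear_combination (1 + u) * h + (1 - u) * ha1 + u * ha0
      have hn2 : (1 + u) ^ 3 * N (n + 2)
          = ((n : ℝ) + 3) * (1 + u) * (1 + (-u) ^ (n + 4))
            - (1 + u ^ 2) * (1 - (-u) ^ (n + 3)) := by
        have h := hNrec n
        simp only [pow_succ] at hn0 hn1 ha2 ⊢
        linear_combination (1 + u) ^ 3 * h + (1 - u) * hn1 + u * hn0 + (1 + u) ^ 2 * ha2
      refine ⟨⟨ha1, ?_⟩, ha2, ?_⟩
      · push_cast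
        linear_combination hn1
      · push_cast
        linear_combination hn2
  exact fun x => (key x).1

theorem conditional_hitting_time_expectation
    (Ω : Type*) [MeasurableSpace Ω] (P : Measure Ω) [IsProbabilityMeasure P]
    (u : ℝ) (hu : u ∈ Set.Ioo (0 : ℝ) 1)
    (ε : ℕ → Ω → ℕ) (hmeas : ∀ k, Measurable (ε k))
    (hindep : iIndepFun ε P)
    (h1 : ∀ k, P {ω | ε k ω = 1} = ENNReal.ofReal (1 - u))
    (h2 : ∀ k, P {ω | ε k ω = 2} = ENNReal.ofReal u)
    (σ : ℕ → Ω → ℕ) (hσ : ∀ y ω, σ y ω = ∑ k ∈ Finset.range y, ε k ω)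
    (x : ℕ) (hx : 1 ≤ x) :
    -- `E(η_x) = Σ_y y · P(σ_y = x)/P(H_x)` where `H_x = {∃ z ≥ 1 : σ_z = x}`
    (∑' y : ℕ, (y : ℝ) *
        ((P {ω | σ y ω = x}).toReal / (P {ω | ∃ z, 1 ≤ z ∧ σ z ω = x}).toReal))
      = ((x + 1 : ℝ) / (1 + u)) * (1 + (-u) ^ (x + 2)) / (1 - (-u) ^ (x + 1))
        - (1 + u ^ 2) / (1 + u) ^ 2 := by
  obtain ⟨hu0, hu1⟩ := hu
  -- measurability
  have hσmeas : ∀ y, Measurable (σ y) := by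
    intro y
    have : σ y = fun ω => ∑ k ∈ Finset.range y, ε k ω := funext (hσ y)
    rw [this]
    exact Finset.measurable_sum _ (fun k _ => hmeas k)
  have hEmeas : ∀ y m, MeasurableSet {ω | σ y ω = m} := by
    intro y m
    exact (hσmeas y) (measurableSet_singleton m)
  have hεmeas : ∀ k c, MeasurableSet {ω | ε k ω = c} := by
    intro k c
    exact (hmeas k) (measurableSet_singleton c)
  -- bad sets
  have hbad : ∀ k, P {ω | ε k ω ≠ 1 ∧ ε k ω ≠ 2} = 0 := by
    intro k
    have hd : Disjoint {ω | ε k ω = 1} {ω | ε k ω = 2} := by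
      rw [Set.disjoint_left]; rintro ω h1' h2'; simp_all
    have hun : P ({ω | ε k ω = 1} ∪ {ω | ε k ω = 2}) = 1 := by
      rw [measure_union hd (hεmeas k 2), h1, h2,
        ← ENNReal.ofReal_add (by linarith) (le_of_lt hu0)]
      norm_num
    have hcompl : {ω | ε k ω ≠ 1 ∧ ε k ω ≠ 2} = ({ω | ε k ω = 1} ∪ {ω | ε k ω = 2})ᶜ := by
      ext ω; simp [not_or]
    rw [hcompl, measure_compl ((hεmeas k 1).union (hεmeas k 2)) (measure_ne_top _ _), hun]
    simp
  have hBad : P (⋃ k, {ω | ε k ω ≠ 1 ∧ ε k ω ≠ 2}) = 0 :=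
    measure_iUnion_null (fun k => hbad k)
  set Bad := ⋃ k, {ω | ε k ω ≠ 1 ∧ ε k ω ≠ 2} with hBadDef
  have hgood : ∀ ω, ω ∉ Bad → ∀ k, ε k ω = 1 ∨ ε k ω = 2 := by
    intro ω hω k
    by_contra h
    push_neg at h
    exact hω (Set.mem_iUnion.2 ⟨k, h⟩)
  -- good ω: σ y ω ≥ y
  have hge : ∀ ω, ω ∉ Bad → ∀ y, y ≤ σ y ω := by
    intro ω hω y
    rw [hσ]
    calc y = ∑ k ∈ Finset.range y, 1 := by simp
    _ ≤ ∑ k ∈ Finset.range y, ε k ω := by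
      apply Finset.sum_le_sum
      intro k _
      rcases hgood ω hω k with h | h <;> omega
  have hmono : ∀ ω, ω ∉ Bad → StrictMono (fun y => σ y ω) := by
    intro ω hω
    apply strictMono_nat_of_lt_succ
    intro y
    simp only [hσ, Finset.sum_range_succ]
    rcases hgood ω hω y with h | h <;> omega
  have hzero : ∀ y m, m < y → P {ω | σ y ω = m} = 0 := by
    intro y m hm
    refine measure_mono_null ?_ hBad
    intro ω hω
    by_contra hb
    have := hge ω hb y
    simp only [Set.mem_setOf_eq] at hω
    omega
  have hbadmeas : ∀ k, MeasurableSet {ω | ε k ω ≠ 1 ∧ ε k ω ≠ 2} := by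
    intro k
    have : {ω | ε k ω ≠ 1 ∧ ε k ω ≠ 2} = ({ω | ε k ω = 1} ∪ {ω | ε k ω = 2})ᶜ := by
      ext ω; simp [not_or]
    rw [this]; exact ((hεmeas k 1).union (hεmeas k 2)).compl
  have hBadMeas : MeasurableSet Bad := MeasurableSet.iUnion hbadmeas
  -- independence of σ y and ε y, and the product rule
  have hprod : ∀ y m c, P ({ω | σ y ω = m} ∩ {ω | ε y ω = c})
      = P {ω | σ y ω = m} * P {ω | ε y ω = c} := by
    intro y m c
    have hind : IndepFun (σ y) (ε y) P := by
      have h := hindep.indepFun_sum_range_succ hmeas y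
      have : σ y = ∑ j ∈ Finset.range y, ε j := by
        funext ω; rw [hσ]; simp
      rwa [← this] at h
    have := hind.measure_inter_preimage_eq_mul {m} {c}
      (measurableSet_singleton m) (measurableSet_singleton c)
    simpa [Set.preimage, Set.mem_singleton_iff] using this
  -- the main recurrence
  have hrec : ∀ y m, P {ω | σ (y + 1) ω = m + 2}
      = P {ω | σ y ω = m + 1} * ENNReal.ofReal (1 - u)
        + P {ω | σ y ω = m} * ENNReal.ofReal u := by
    intro y m
    set E1 := {ω | σ y ω = m + 1} ∩ {ω | ε y ω = 1} with hE1
    set E2 := {ω | σ y ω = m} ∩ {ω | ε y ω = 2} with hE2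
    have hsplit : ∀ ω, σ (y + 1) ω = σ y ω + ε y ω := by
      intro ω; simp [hσ, Finset.sum_range_succ]
    have hsub : E1 ∪ E2 ⊆ {ω | σ (y + 1) ω = m + 2} := by
      rintro ω (⟨ha, hb⟩ | ⟨ha, hb⟩) <;>
        simp only [Set.mem_setOf_eq] at * <;> rw [hsplit] <;> omega
    have hdiff : {ω | σ (y + 1) ω = m + 2} \ (E1 ∪ E2) ⊆ {ω | ε y ω ≠ 1 ∧ ε y ω ≠ 2} := by
      rintro ω ⟨ha, hb⟩
      simp only [Set.mem_setOf_eq] at ha ⊢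
      rw [hsplit] at ha
      constructor <;> intro hc <;> apply hb
      · refine Or.inl ⟨?_, hc⟩
        show σ y ω = m + 1
        omega
      · refine Or.inr ⟨?_, hc⟩
        show σ y ω = m
        omega
    have hmeq : P {ω | σ (y + 1) ω = m + 2} = P (E1 ∪ E2) := by
      apply le_antisymm
      · calc P {ω | σ (y + 1) ω = m + 2}
            ≤ P ((E1 ∪ E2) ∪ {ω | ε y ω ≠ 1 ∧ ε y ω ≠ 2}) := by
              apply measure_mono
              intro ω hω
              by_cases h : ω ∈ E1 ∪ E2
              · exact Or.inl h
              · exact Or.inr (hdiff ⟨hω, h⟩)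
          _ ≤ P (E1 ∪ E2) + P {ω | ε y ω ≠ 1 ∧ ε y ω ≠ 2} := measure_union_le _ _
          _ = P (E1 ∪ E2) := by
              have : P {ω | ε y ω ≠ 1 ∧ ε y ω ≠ 2} = 0 := by
                refine measure_mono_null ?_ hBad
                exact Set.subset_iUnion (fun k => {ω | ε k ω ≠ 1 ∧ ε k ω ≠ 2}) y
              rw [this, add_zero]
      · exact measure_mono hsub
    have hdisj : Disjoint E1 E2 := by
      rw [Set.disjoint_left]
      rintro ω ⟨_, hb⟩ ⟨_, hb'⟩
      simp only [Set.mem_setOf_eq] at hb hb'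
      omega
    rw [hmeq, measure_union hdisj ((hEmeas y m).inter (hεmeas y 2)),
      hE1, hE2, hprod, hprod, h1, h2]
  -- real-valued point probabilities and partial sums
  set q : ℕ → ℕ → ℝ := fun y m => (P {ω | σ y ω = m}).toReal with hq
  set A : ℕ → ℝ := fun m => ∑ y ∈ Finset.range (m + 1), q y m with hA
  set N : ℕ → ℝ := fun m => ∑ y ∈ Finset.range (m + 1), (y : ℝ) * q y m with hN
  have hq0 : ∀ y m, m < y → q y m = 0 := by
    intro y m hm; simp [hq, hzero y m hm]
  have hσ0 : ∀ ω, σ 0 ω = 0 := by intro ω; simp [hσ]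
  have hq00 : q 0 0 = 1 := by
    have : {ω | σ 0 ω = 0} = Set.univ := by ext ω; simp [hσ0]
    simp [hq, this]
  have hq0m : ∀ m, 1 ≤ m → q 0 m = 0 := by
    intro m hm
    have : {ω | σ 0 ω = m} = ∅ := by ext ω; simp [hσ0]; omega
    simp [hq, this]
  have hq11 : q 1 1 = 1 - u := by
    have : {ω | σ 1 ω = 1} = {ω | ε 0 ω = 1} := by
      ext ω; simp [hσ]
    rw [hq]; simp only [this, h1 0]
    exact ENNReal.toReal_ofReal (by linarith)
  -- real recurrence for q
  have hqrec : ∀ y m, q (y + 1) (m + 2) = (1 - u) * q y (m + 1) + u * q y m := by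
    intro y m
    rw [hq]
    simp only [hrec y m]
    rw [ENNReal.toReal_add (by finiteness) (by finiteness), ENNReal.toReal_mul,
      ENNReal.toReal_mul, ENNReal.toReal_ofReal (by linarith),
      ENNReal.toReal_ofReal (by linarith)]
    ring
  -- recurrences for A and N
  have hArec : ∀ m, A (m + 2) = (1 - u) * A (m + 1) + u * A m := by
    intro m
    rw [hA]
    simp only
    rw [Finset.sum_range_succ' _ (m + 2)]
    have e0 : q 0 (m + 2) = 0 := hq0m _ (by omega)
    rw [e0, add_zero]
    have : ∀ y ∈ Finset.range (m + 2), q (y + 1) (m + 2)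
        = (1 - u) * q y (m + 1) + u * q y m := fun y _ => hqrec y m
    rw [Finset.sum_congr rfl this, Finset.sum_add_distrib, ← Finset.mul_sum, ← Finset.mul_sum]
    have e1 : ∑ y ∈ Finset.range (m + 2), q y m
        = ∑ y ∈ Finset.range (m + 1), q y m := by
      rw [Finset.sum_range_succ, hq0 (m + 1) m (by omega), add_zero]
    rw [e1]
  have hNrec : ∀ m, N (m + 2) = (1 - u) * N (m + 1) + u * N m + A (m + 2) := by
    intro m
    have hA2 := hArec m
    rw [hN, hA]
    simp only
    rw [Finset.sum_range_succ' (fun y => (y : ℝ) * q y (m + 2)) (m + 2)]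
    simp only [Nat.cast_zero, zero_mul, add_zero, Nat.cast_add, Nat.cast_one]
    have : ∀ y ∈ Finset.range (m + 2), ((y : ℝ) + 1) * q (y + 1) (m + 2)
        = (1 - u) * ((y : ℝ) * q y (m + 1)) + u * ((y : ℝ) * q y m)
          + ((1 - u) * q y (m + 1) + u * q y m) := by
      intro y _
      rw [hqrec y m]; ring
    rw [Finset.sum_congr rfl this]
    simp only [Finset.sum_add_distrib, ← Finset.mul_sum]
    have e1 : ∑ y ∈ Finset.range (m + 2), (y : ℝ) * q y m
        = ∑ y ∈ Finset.range (m + 1), (y : ℝ) * q y m := by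
      rw [Finset.sum_range_succ, hq0 (m + 1) m (by omega), mul_zero, add_zero]
    have e2 : ∑ y ∈ Finset.range (m + 2), q y m
        = ∑ y ∈ Finset.range (m + 1), q y m := by
      rw [Finset.sum_range_succ, hq0 (m + 1) m (by omega), add_zero]
    rw [e1, e2]
    have hA2' : (∑ y ∈ Finset.range (m + 2 + 1), q y (m + 2))
        = (1 - u) * ∑ y ∈ Finset.range (m + 1 + 1), q y (m + 1)
          + u * ∑ y ∈ Finset.range (m + 1), q y m := by
      simpa [hA] using hA2
    rw [hA2']
  -- base values
  have hA0 : A 0 = 1 := by simp [hA, hq00]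
  have hA1 : A 1 = 1 - u := by
    rw [hA]
    simp [Finset.sum_range_succ, hq0m 1 le_rfl, hq11]
  have hN0 : N 0 = 0 := by simp [hN]
  have hN1 : N 1 = 1 - u := by
    rw [hN]
    simp [Finset.sum_range_succ, hq11]
  have hcf := hit_closed_form u A N hA0 hA1 hN0 hN1 hArec hNrec
  have hu1p : (0:ℝ) < 1 + u := by linarith
  have hvabs : |(-u) ^ (x + 1)| < 1 := by
    rw [abs_pow, abs_neg, abs_of_pos hu0]
    exact pow_lt_one₀ (le_of_lt hu0) hu1 (by omega)
  have hvlt : (-u) ^ (x + 1) < 1 := lt_of_le_of_lt (le_abs_self _) hvabs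
  have hvpos : (0:ℝ) < 1 - (-u) ^ (x + 1) := by linarith
  -- hitting probability
  have hH : P {ω | ∃ z, 1 ≤ z ∧ σ z ω = x}
      = ∑ z ∈ Finset.Icc 1 x, P {ω | σ z ω = x} := by
    set H := {ω | ∃ z, 1 ≤ z ∧ σ z ω = x} with hHdef
    set E' : ℕ → Set Ω := fun z => {ω | σ z ω = x} \ Bad with hE'
    have hE'meas : ∀ z ∈ Finset.Icc 1 x, MeasurableSet (E' z) :=
      fun z _ => (hEmeas z x).diff hBadMeas
    have hE'disj : Set.Pairwise ↑(Finset.Icc 1 x) (Function.onFun Disjoint E') := by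
      intro z _ z' _ hzz'
      rw [Function.onFun, Set.disjoint_left]
      rintro ω ⟨hσz, hωB⟩ ⟨hσz', _⟩
      simp only [Set.mem_setOf_eq] at hσz hσz'
      exact hzz' ((hmono ω hωB).injective (hσz.trans hσz'.symm))
    apply le_antisymm
    · have s1 : P H ≤ P ((⋃ z ∈ Finset.Icc 1 x, {ω | σ z ω = x}) ∪ Bad) := by
        apply measure_mono
        rintro ω ⟨z, hz1, hσz⟩
        by_cases hb : ω ∈ Bad
        · exact Or.inr hb
        · left
          simp only [Set.mem_iUnion]
          exact ⟨z, Finset.mem_Icc.2 ⟨hz1, by have := hge ω hb z; omega⟩, hσz⟩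
      have s2 : P ((⋃ z ∈ Finset.Icc 1 x, {ω | σ z ω = x}) ∪ Bad)
          ≤ P (⋃ z ∈ Finset.Icc 1 x, {ω | σ z ω = x}) + P Bad := measure_union_le _ _
      have s3 : P (⋃ z ∈ Finset.Icc 1 x, {ω | σ z ω = x})
          ≤ ∑ z ∈ Finset.Icc 1 x, P {ω | σ z ω = x} := measure_biUnion_finset_le _ _
      rw [hBad, add_zero] at s2
      exact le_trans s1 (le_trans s2 s3)
    · have s1 : ∑ z ∈ Finset.Icc 1 x, P {ω | σ z ω = x}
          = ∑ z ∈ Finset.Icc 1 x, P (E' z) := by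
        refine Finset.sum_congr rfl fun z _ => ?_
        rw [hE']
        exact (measure_diff_null hBad).symm
      have s2 : P (⋃ z ∈ Finset.Icc 1 x, E' z) = ∑ z ∈ Finset.Icc 1 x, P (E' z) :=
        measure_biUnion_finset hE'disj hE'meas
      have s3 : P (⋃ z ∈ Finset.Icc 1 x, E' z) ≤ P H := by
        apply measure_mono
        rintro ω hω
        obtain ⟨z, hz, hσz, -⟩ := Set.mem_iUnion₂.1 hω
        rw [Finset.mem_Icc] at hz
        exact ⟨z, hz.1, hσz⟩
      rw [s1, ← s2]
      exact s3
  have hHtoReal : (P {ω | ∃ z, 1 ≤ z ∧ σ z ω = x}).toReal = A x := by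
    rw [hH, ENNReal.toReal_sum (fun z _ => measure_ne_top _ _)]
    have hins : Finset.range (x + 1) = insert 0 (Finset.Icc 1 x) := by
      ext a; simp only [Finset.mem_range, Finset.mem_insert, Finset.mem_Icc]; omega
    rw [hA]
    simp only
    rw [hins, Finset.sum_insert (by simp), hq0m x hx, zero_add]
  -- positivity of A x
  have hAx := (hcf x).1
  have hNx := (hcf x).2
  have hAval : A x = (1 - (-u) ^ (x + 1)) / (1 + u) := by
    field_simp
    linarith [hAx]
  have hApos : 0 < A x := by
    rw [hAval]; positivity
  -- tsum
  have hts : (∑' y : ℕ, (y : ℝ) *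
      ((P {ω | σ y ω = x}).toReal / (P {ω | ∃ z, 1 ≤ z ∧ σ z ω = x}).toReal))
      = N x / A x := by
    rw [tsum_eq_sum (s := Finset.range (x + 1)) ?_]
    · rw [hHtoReal, hN]
      simp only
      rw [Finset.sum_div]
      refine Finset.sum_congr rfl fun y _ => ?_
      rw [hq]
      simp only
      rw [mul_div_assoc]
    · intro y hy
      rw [Finset.mem_range] at hy
      have : P {ω | σ y ω = x} = 0 := hzero y x (by omega)
      rw [this]
      simp
  rw [hts]
  -- final algebra
  have hNval : N x = (((x : ℝ) + 1) * (1 + u) * (1 + (-u) ^ (x + 2))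
      - (1 + u ^ 2) * (1 - (-u) ^ (x + 1))) / (1 + u) ^ 3 := by
    field_simp
    linarith [hNx]
  rw [hNval, hAval]
  field_simp
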